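/- Under the decomposition E[⟨x_k - x_⋆, v_ℓ⟩] = E[⟨x_k - x̂_k, v_ℓ⟩] + E[⟨x̂_k - x_⋆, v_ℓ⟩] of the REK iterate, where x̂_k = x_{k-1} - ((A^{(i)} x_{k-1} - A^{(i)} x_⋆)/||A^{(i)}||^2)(A^{(i)})^T is the one-step RK update for A x = A x_⋆ from x_{k-1}, the first term satisfies E[⟨x_k - x̂_k, v_ℓ⟩] = (1/||A||_F^2)(1 - σ_ℓ^2/||A||_F^2)^k ⟨b - A x_⋆ - z_0, A v_ℓ⟩. -/

import Mathlib

open Matrix BigOperators Finset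

noncomputable def frob2 {m n : ℕ} (A : Matrix (Fin m) (Fin n) ℝ) : ℝ :=
  ∑ i, ∑ j, (A i j) ^ 2

noncomputable def colNorm2 {m n : ℕ} (A : Matrix (Fin m) (Fin n) ℝ) (j : Fin n) : ℝ :=
  ∑ i, (A i j) ^ 2

noncomputable def rowNorm2 {m n : ℕ} (A : Matrix (Fin m) (Fin n) ℝ) (i : Fin m) : ℝ :=
  ∑ j, (A i j) ^ 2

noncomputable def colStep {m n : ℕ} (A : Matrix (Fin m) (Fin n) ℝ) (j : Fin n)
    (z : Fin m → ℝ) : Fin m → ℝ :=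
  z - ((Aᵀ j ⬝ᵥ z) / colNorm2 A j) • Aᵀ j

/-- One REK step: first an RK step on `Aᵀ z = 0` using column `j = p.1`, then an RK
step on `A x = b - z_k` using row `i = p.2` (with the freshly updated `z`). -/
noncomputable def rekStep {m n : ℕ} (A : Matrix (Fin m) (Fin n) ℝ)
    (b : Fin m → ℝ) (p : Fin n × Fin m) (s : (Fin m → ℝ) × (Fin n → ℝ)) :
    (Fin m → ℝ) × (Fin n → ℝ) :=
  let z' := colStep A p.1 s.1
  (z', s.2 - ((A p.2 ⬝ᵥ s.2 - b p.2 + z' p.2) / rowNorm2 A p.2) • A p.2)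

/-- REK iterates: the head of the list is the pair of indices of the most recent step. -/
noncomputable def rekIter {m n : ℕ} (A : Matrix (Fin m) (Fin n) ℝ)
    (b : Fin m → ℝ) (s0 : (Fin m → ℝ) × (Fin n → ℝ)) :
    List (Fin n × Fin m) → (Fin m → ℝ) × (Fin n → ℝ)
  | [] => s0
  | p :: l => rekStep A b p (rekIter A b s0 l)

/-- Probability of choosing the index pair `p` at a given REK step. -/
noncomputable def rekProb {m n : ℕ} (A : Matrix (Fin m) (Fin n) ℝ)
    (p : Fin n × Fin m) : ℝ :=
  (colNorm2 A p.1 / frob2 A) * (rowNorm2 A p.2 / frob2 A)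


section helpers

set_option linter.unusedVariables false


variable {m n : ℕ}

lemma sum_sq_eq_zero {k : ℕ} {f : Fin k → ℝ} (h : ∑ i, (f i) ^ 2 = 0) : ∀ i, f i = 0 := by
  intro i
  have := (Finset.sum_eq_zero_iff_of_nonneg (fun j _ => sq_nonneg (f j))).mp h i (mem_univ i)
  exact pow_eq_zero_iff (two_ne_zero) |>.mp this

lemma frob2_pos (A : Matrix (Fin m) (Fin n) ℝ) (hA : A ≠ 0) : 0 < frob2 A := by
  have h0 : 0 ≤ frob2 A :=
    Finset.sum_nonneg fun i _ => Finset.sum_nonneg fun j _ => sq_nonneg _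
  rcases h0.lt_or_eq with h | h
  · exact h
  · exfalso; apply hA
    ext i j
    have hi := (Finset.sum_eq_zero_iff_of_nonneg
      (fun i _ => Finset.sum_nonneg fun j _ => sq_nonneg (A i j))).mp h.symm i (mem_univ i)
    exact sum_sq_eq_zero hi j

lemma sum_colNorm2 (A : Matrix (Fin m) (Fin n) ℝ) : ∑ j, colNorm2 A j = frob2 A := by
  unfold colNorm2 frob2; rw [Finset.sum_comm]

lemma sum_rowNorm2 (A : Matrix (Fin m) (Fin n) ℝ) : ∑ i, rowNorm2 A i = frob2 A := rfl

lemma dot_mulVec_eq (A : Matrix (Fin m) (Fin n) ℝ) (w : Fin m → ℝ) (v : Fin n → ℝ) :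
    w ⬝ᵥ (A *ᵥ v) = (Aᵀ *ᵥ w) ⬝ᵥ v := by
  simp only [dotProduct, mulVec, transpose_apply, Finset.mul_sum, Finset.sum_mul]
  rw [Finset.sum_comm]
  exact Finset.sum_congr rfl fun i _ => Finset.sum_congr rfl fun j _ => by ring

lemma one_step (A : Matrix (Fin m) (Fin n) ℝ) (hF : frob2 A ≠ 0)
    (σ : ℝ) (v : Fin n → ℝ) (hv : Aᵀ *ᵥ (A *ᵥ v) = σ ^ 2 • v) (z : Fin m → ℝ) :
    ∑ j, (colNorm2 A j / frob2 A) * ((colStep A j z) ⬝ᵥ (A *ᵥ v))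
      = (1 - σ ^ 2 / frob2 A) * (z ⬝ᵥ (A *ᵥ v)) := by
  have hAv : ∀ j, Aᵀ j ⬝ᵥ (A *ᵥ v) = σ ^ 2 * v j := by
    intro j
    have := congrFun hv j
    exact this
  have step : ∀ j, (colStep A j z) ⬝ᵥ (A *ᵥ v)
      = z ⬝ᵥ (A *ᵥ v) - ((Aᵀ j ⬝ᵥ z) / colNorm2 A j) * (σ ^ 2 * v j) := by
    intro j
    unfold colStep
    rw [sub_dotProduct, smul_dotProduct, hAv j, smul_eq_mul]
  have key : ∀ j, (colNorm2 A j / frob2 A) * (((Aᵀ j ⬝ᵥ z) / colNorm2 A j) * (σ ^ 2 * v j))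
      = (σ ^ 2 / frob2 A) * ((Aᵀ j ⬝ᵥ z) * v j) := by
    intro j
    by_cases hc : colNorm2 A j = 0
    · have hz : Aᵀ j ⬝ᵥ z = 0 := by
        have hcol : ∀ i, A i j = 0 := sum_sq_eq_zero hc
        simp [dotProduct, transpose_apply, hcol]
      simp [hz]
    · field_simp
  calc ∑ j, (colNorm2 A j / frob2 A) * ((colStep A j z) ⬝ᵥ (A *ᵥ v))
      = ∑ j, ((colNorm2 A j / frob2 A) * (z ⬝ᵥ (A *ᵥ v))
          - (σ ^ 2 / frob2 A) * ((Aᵀ j ⬝ᵥ z) * v j)) := by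
        refine Finset.sum_congr rfl fun j _ => ?_
        rw [step j, mul_sub, key j]
    _ = (∑ j, colNorm2 A j) / frob2 A * (z ⬝ᵥ (A *ᵥ v))
          - (σ ^ 2 / frob2 A) * ((Aᵀ *ᵥ z) ⬝ᵥ v) := by
        rw [Finset.sum_sub_distrib, ← Finset.sum_mul, ← Finset.mul_sum, Finset.sum_div]
        rfl
    _ = (1 - σ ^ 2 / frob2 A) * (z ⬝ᵥ (A *ᵥ v)) := by
        rw [sum_colNorm2, div_self hF, ← dot_mulVec_eq]
        ring

lemma colStep_commute (A : Matrix (Fin m) (Fin n) ℝ) (b : Fin m → ℝ) (xs : Fin n → ℝ)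
    (hls : Aᵀ *ᵥ (b - A *ᵥ xs) = 0) (j : Fin n) (z : Fin m → ℝ) :
    (b - A *ᵥ xs) - colStep A j z = colStep A j ((b - A *ᵥ xs) - z) := by
  have h0 : Aᵀ j ⬝ᵥ (b - A *ᵥ xs) = 0 := congrFun hls j
  have hd : Aᵀ j ⬝ᵥ ((b - A *ᵥ xs) - z) = -(Aᵀ j ⬝ᵥ z) := by
    rw [dotProduct_sub, h0, zero_sub]
  unfold colStep
  rw [hd]
  ext i
  simp only [Pi.sub_apply, Pi.smul_apply, smul_eq_mul]
  ring

lemma sum_rekProb_fst (A : Matrix (Fin m) (Fin n) ℝ) (hF : frob2 A ≠ 0) (T : Fin n → ℝ) :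
    ∑ p : Fin n × Fin m, rekProb A p * T p.1
      = ∑ j, (colNorm2 A j / frob2 A) * T j := by
  rw [Fintype.sum_prod_type]
  refine Finset.sum_congr rfl fun j _ => ?_
  have hr : ∑ i, rowNorm2 A i / frob2 A = 1 := by
    rw [← Finset.sum_div, sum_rowNorm2, div_self hF]
  calc ∑ i, rekProb A (j, i) * T j
      = (colNorm2 A j / frob2 A * T j) * ∑ i, rowNorm2 A i / frob2 A := by
        rw [Finset.mul_sum]
        exact Finset.sum_congr rfl fun i _ => by simp only [rekProb]; ring
    _ = colNorm2 A j / frob2 A * T j := by rw [hr, mul_one]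

/-- splitting a sum over `Fin (k+1) → X` into the head value and the tail function -/
lemma sum_fun_succ {X : Type*} [Fintype X] (k : ℕ) (f : (Fin (k + 1) → X) → ℝ) :
    ∑ ω : Fin (k + 1) → X, f ω = ∑ p : X, ∑ ω : Fin k → X, f (Fin.cons p ω) := by
  rw [← Equiv.sum_comp (Fin.consEquiv (fun _ : Fin (k + 1) => X)) f, Fintype.sum_prod_type]
  rfl

lemma Ek (A : Matrix (Fin m) (Fin n) ℝ) (hF : frob2 A ≠ 0) (b : Fin m → ℝ) (xs : Fin n → ℝ)
    (hls : Aᵀ *ᵥ (b - A *ᵥ xs) = 0) (σ : ℝ) (v : Fin n → ℝ)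
    (hv : Aᵀ *ᵥ (A *ᵥ v) = σ ^ 2 • v) (x0 : Fin n → ℝ) (z0 : Fin m → ℝ) :
    ∀ k : ℕ,
      ∑ ω : Fin k → Fin n × Fin m,
          (∏ t, rekProb A (ω t)) *
            (((b - A *ᵥ xs) - (rekIter A b (z0, x0) (List.ofFn ω)).1) ⬝ᵥ (A *ᵥ v))
        = (1 - σ ^ 2 / frob2 A) ^ k * (((b - A *ᵥ xs) - z0) ⬝ᵥ (A *ᵥ v)) := by
  intro k
  induction k with
  | zero => simp [rekIter, List.ofFn_zero]
  | succ k ih =>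
    rw [sum_fun_succ]
    have hcons : ∀ (p : Fin n × Fin m) (ω : Fin k → Fin n × Fin m),
        List.ofFn (Fin.cons p ω : Fin (k+1) → Fin n × Fin m) = p :: List.ofFn ω := by
      intro p ω
      rw [List.ofFn_succ]
      simp [Fin.cons_zero, Fin.cons_succ]
    have hprod : ∀ (p : Fin n × Fin m) (ω : Fin k → Fin n × Fin m),
        (∏ t : Fin (k+1), rekProb A ((Fin.cons p ω : Fin (k+1) → _) t))
          = rekProb A p * ∏ t : Fin k, rekProb A (ω t) := by
      intro p ω
      rw [Fin.prod_univ_succ]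
      simp [Fin.cons_zero, Fin.cons_succ]
    calc ∑ p : Fin n × Fin m, ∑ ω : Fin k → Fin n × Fin m,
            (∏ t, rekProb A ((Fin.cons p ω : Fin (k+1) → _) t)) *
              (((b - A *ᵥ xs) - (rekIter A b (z0, x0) (List.ofFn (Fin.cons p ω : Fin (k+1) → _))).1) ⬝ᵥ (A *ᵥ v))
        = ∑ ω : Fin k → Fin n × Fin m, ∑ p : Fin n × Fin m,
            (∏ t, rekProb A (ω t)) *
              (rekProb A p *
                ((colStep A p.1 ((b - A *ᵥ xs) - (rekIter A b (z0, x0) (List.ofFn ω)).1)) ⬝ᵥ (A *ᵥ v))) := by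
          rw [Finset.sum_comm]
          refine Finset.sum_congr rfl fun ω _ => Finset.sum_congr rfl fun p _ => ?_
          rw [hprod, hcons]
          show _ * (((b - A *ᵥ xs) - (rekStep A b p (rekIter A b (z0, x0) (List.ofFn ω))).1) ⬝ᵥ _) = _
          rw [show (rekStep A b p (rekIter A b (z0, x0) (List.ofFn ω))).1
              = colStep A p.1 (rekIter A b (z0, x0) (List.ofFn ω)).1 from rfl,
            ← colStep_commute A b xs hls]
          ring
      _ = ∑ ω : Fin k → Fin n × Fin m,
            (∏ t, rekProb A (ω t)) *
              ((1 - σ ^ 2 / frob2 A) *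
                (((b - A *ᵥ xs) - (rekIter A b (z0, x0) (List.ofFn ω)).1) ⬝ᵥ (A *ᵥ v))) := by
          refine Finset.sum_congr rfl fun ω _ => ?_
          rw [← Finset.mul_sum]
          congr 1
          rw [sum_rekProb_fst A hF (fun j =>
              (colStep A j ((b - A *ᵥ xs) - (rekIter A b (z0, x0) (List.ofFn ω)).1)) ⬝ᵥ (A *ᵥ v))]
          exact one_step A hF σ v hv _
      _ = (1 - σ ^ 2 / frob2 A) ^ (k + 1) * (((b - A *ᵥ xs) - z0) ⬝ᵥ (A *ᵥ v)) := by
          have : ∀ ω : Fin k → Fin n × Fin m,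
              (∏ t, rekProb A (ω t)) * ((1 - σ ^ 2 / frob2 A) *
                (((b - A *ᵥ xs) - (rekIter A b (z0, x0) (List.ofFn ω)).1) ⬝ᵥ (A *ᵥ v)))
              = (1 - σ ^ 2 / frob2 A) * ((∏ t, rekProb A (ω t)) *
                (((b - A *ᵥ xs) - (rekIter A b (z0, x0) (List.ofFn ω)).1) ⬝ᵥ (A *ᵥ v))) :=
            fun ω => by ring
          rw [Finset.sum_congr rfl fun ω _ => this ω, ← Finset.mul_sum, ih, pow_succ]
          ring
lemma diff_dot (A : Matrix (Fin m) (Fin n) ℝ) (i : Fin m) (X xs : Fin n → ℝ)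
    (b z' : Fin m → ℝ) (v : Fin n → ℝ) :
    ((X - ((A i ⬝ᵥ X - b i + z' i) / rowNorm2 A i) • A i) -
     (X - ((A i ⬝ᵥ (X - xs)) / rowNorm2 A i) • A i)) ⬝ᵥ v
    = ((b - A *ᵥ xs - z') i / rowNorm2 A i) * (A i ⬝ᵥ v) := by
  have h1 : (b - A *ᵥ xs - z') i = b i - A i ⬝ᵥ xs - z' i := rfl
  rw [h1]
  simp only [sub_dotProduct, smul_dotProduct, dotProduct_sub,
    smul_eq_mul]
  ring

lemma row_sum (A : Matrix (Fin m) (Fin n) ℝ) (hF : frob2 A ≠ 0) (w : Fin m → ℝ)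
    (v : Fin n → ℝ) :
    ∑ i, (rowNorm2 A i / frob2 A) * ((w i / rowNorm2 A i) * (A i ⬝ᵥ v))
      = (1 / frob2 A) * (w ⬝ᵥ (A *ᵥ v)) := by
  have h : w ⬝ᵥ (A *ᵥ v) = ∑ i, w i * (A i ⬝ᵥ v) := rfl
  rw [h, Finset.mul_sum]
  refine Finset.sum_congr rfl fun i _ => ?_
  by_cases hr : rowNorm2 A i = 0
  · have hc : ∀ j, A i j = 0 := sum_sq_eq_zero hr
    simp [dotProduct, hc, hr]
  · field_simp

end helpers

/-- the first term of the REK error decomposition. Here, for a sample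
`ω` of the first `k` index pairs (the head entry `ω 0` being the `k`-th, most
recent, step), `x_k` is the REK iterate, and `x̂_k` is the one-step RK update for
`A x = A x⋆` from `x_{k-1}` using the same row index as the `k`-th REK step. Then
`E[⟨x_k - x̂_k, vℓ⟩] = (1/‖A‖_F²)(1-σℓ²/‖A‖_F²)^k ⟨b - A x⋆ - z_0, A vℓ⟩`. -/
theorem rek_first_term_expectation {m n : ℕ}
    (A : Matrix (Fin m) (Fin n) ℝ) (hA : A ≠ 0)
    (b : Fin m → ℝ) (xs : Fin n → ℝ)
    (hls : Aᵀ *ᵥ (b - A *ᵥ xs) = 0) (hxs : ∃ y, xs = Aᵀ *ᵥ y)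
    (x0 : Fin n → ℝ) (hx0 : ∃ u, x0 = Aᵀ *ᵥ u)
    (z0 : Fin m → ℝ) (hz0 : ∃ y, z0 = b + A *ᵥ y)
    (σ : ℝ) (hσ : 0 ≤ σ) (v : Fin n → ℝ)
    (hv : Aᵀ *ᵥ (A *ᵥ v) = σ ^ 2 • v)
    (k : ℕ) (hk : 0 < k) :
    ∑ ω : Fin k → Fin n × Fin m,
        (∏ t, rekProb A (ω t)) *
          (((rekIter A b (z0, x0) (List.ofFn ω)).2
              - ((rekIter A b (z0, x0) ((List.ofFn ω).tail)).2
                  - ((A (ω ⟨0, hk⟩).2 ⬝ᵥ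
                        ((rekIter A b (z0, x0) ((List.ofFn ω).tail)).2 - xs))
                      / rowNorm2 A (ω ⟨0, hk⟩).2) • A (ω ⟨0, hk⟩).2)) ⬝ᵥ v)
      = (1 / frob2 A) * (1 - σ ^ 2 / frob2 A) ^ k
          * ((b - A *ᵥ xs - z0) ⬝ᵥ (A *ᵥ v)) := by
  have hF : frob2 A ≠ 0 := (frob2_pos A hA).ne'
  obtain ⟨k', rfl⟩ : ∃ k', k = k' + 1 := ⟨k - 1, (Nat.succ_pred_eq_of_pos hk).symm⟩
  rw [sum_fun_succ, Finset.sum_comm]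
  have hcons : ∀ (p : Fin n × Fin m) (ω : Fin k' → Fin n × Fin m),
      List.ofFn (Fin.cons p ω : Fin (k' + 1) → Fin n × Fin m) = p :: List.ofFn ω := by
    intro p ω
    rw [List.ofFn_succ]
    simp [Fin.cons_zero, Fin.cons_succ]
  have hprod : ∀ (p : Fin n × Fin m) (ω : Fin k' → Fin n × Fin m),
      (∏ t : Fin (k' + 1), rekProb A ((Fin.cons p ω : Fin (k' + 1) → _) t))
        = rekProb A p * ∏ t : Fin k', rekProb A (ω t) := by
    intro p ω
    rw [Fin.prod_univ_succ]
    simp [Fin.cons_zero, Fin.cons_succ]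
  calc ∑ ω : Fin k' → Fin n × Fin m, ∑ p : Fin n × Fin m,
        (∏ t, rekProb A ((Fin.cons p ω : Fin (k' + 1) → _) t)) *
          (((rekIter A b (z0, x0) (List.ofFn (Fin.cons p ω : Fin (k' + 1) → _))).2
              - ((rekIter A b (z0, x0) ((List.ofFn (Fin.cons p ω : Fin (k' + 1) → _)).tail)).2
                  - ((A ((Fin.cons p ω : Fin (k' + 1) → _) ⟨0, hk⟩).2 ⬝ᵥ
                        ((rekIter A b (z0, x0) ((List.ofFn (Fin.cons p ω : Fin (k' + 1) → _)).tail)).2 - xs))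
                      / rowNorm2 A ((Fin.cons p ω : Fin (k' + 1) → _) ⟨0, hk⟩).2)
                    • A ((Fin.cons p ω : Fin (k' + 1) → _) ⟨0, hk⟩).2)) ⬝ᵥ v)
      = ∑ ω : Fin k' → Fin n × Fin m, ∑ p : Fin n × Fin m,
          (rekProb A p * ∏ t, rekProb A (ω t)) *
            (((b - A *ᵥ xs - colStep A p.1 (rekIter A b (z0, x0) (List.ofFn ω)).1) p.2
                / rowNorm2 A p.2) * (A p.2 ⬝ᵥ v)) := by
        refine Finset.sum_congr rfl fun ω _ => Finset.sum_congr rfl fun p _ => ?_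
        have hz : (Fin.cons p ω : Fin (k' + 1) → Fin n × Fin m) ⟨0, hk⟩ = p := rfl
        rw [hprod, hcons, hz, List.tail_cons]
        congr 1
        have hstep : (rekIter A b (z0, x0) (p :: List.ofFn ω)).2
            = (rekIter A b (z0, x0) (List.ofFn ω)).2
              - ((A p.2 ⬝ᵥ (rekIter A b (z0, x0) (List.ofFn ω)).2 - b p.2
                  + (colStep A p.1 (rekIter A b (z0, x0) (List.ofFn ω)).1) p.2)
                  / rowNorm2 A p.2) • A p.2 := rfl
        rw [hstep, diff_dot]
    _ = ∑ ω : Fin k' → Fin n × Fin m,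
          (∏ t, rekProb A (ω t)) * ((1 / frob2 A) * ((1 - σ ^ 2 / frob2 A) *
            (((b - A *ᵥ xs) - (rekIter A b (z0, x0) (List.ofFn ω)).1) ⬝ᵥ (A *ᵥ v)))) := by
        refine Finset.sum_congr rfl fun ω _ => ?_
        rw [Fintype.sum_prod_type]
        have hinner : ∀ j : Fin n,
            ∑ i : Fin m, (rekProb A (j, i) * ∏ t, rekProb A (ω t)) *
              (((b - A *ᵥ xs - colStep A j (rekIter A b (z0, x0) (List.ofFn ω)).1) i
                  / rowNorm2 A i) * (A i ⬝ᵥ v))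
            = ((∏ t, rekProb A (ω t)) * (colNorm2 A j / frob2 A)) *
                ((1 / frob2 A) *
                  ((b - A *ᵥ xs - colStep A j (rekIter A b (z0, x0) (List.ofFn ω)).1)
                    ⬝ᵥ (A *ᵥ v))) := by
          intro j
          rw [← row_sum A hF
            (b - A *ᵥ xs - colStep A j (rekIter A b (z0, x0) (List.ofFn ω)).1) v,
            Finset.mul_sum]
          refine Finset.sum_congr rfl fun i _ => ?_
          simp only [rekProb]
          ring
        rw [Finset.sum_congr rfl fun j _ => hinner j]
        have hrw : ∀ j : Fin n,
            ((∏ t, rekProb A (ω t)) * (colNorm2 A j / frob2 A)) *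
                ((1 / frob2 A) *
                  ((b - A *ᵥ xs - colStep A j (rekIter A b (z0, x0) (List.ofFn ω)).1)
                    ⬝ᵥ (A *ᵥ v)))
            = ((∏ t, rekProb A (ω t)) * (1 / frob2 A)) *
                ((colNorm2 A j / frob2 A) *
                  ((colStep A j ((b - A *ᵥ xs) - (rekIter A b (z0, x0) (List.ofFn ω)).1))
                    ⬝ᵥ (A *ᵥ v))) := by
          intro j
          rw [← colStep_commute A b xs hls]
          ring
        rw [Finset.sum_congr rfl fun j _ => hrw j, ← Finset.mul_sum,
          one_step A hF σ v hv]
        ring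
    _ = (1 / frob2 A) * (1 - σ ^ 2 / frob2 A) ^ (k' + 1)
          * ((b - A *ᵥ xs - z0) ⬝ᵥ (A *ᵥ v)) := by
        have : ∀ ω : Fin k' → Fin n × Fin m,
            (∏ t, rekProb A (ω t)) * ((1 / frob2 A) * ((1 - σ ^ 2 / frob2 A) *
              (((b - A *ᵥ xs) - (rekIter A b (z0, x0) (List.ofFn ω)).1) ⬝ᵥ (A *ᵥ v))))
            = ((1 / frob2 A) * (1 - σ ^ 2 / frob2 A)) *
              ((∏ t, rekProb A (ω t)) *
                (((b - A *ᵥ xs) - (rekIter A b (z0, x0) (List.ofFn ω)).1) ⬝ᵥ (A *ᵥ v))) :=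
          fun ω => by ring
        rw [Finset.sum_congr rfl fun ω _ => this ω, ← Finset.mul_sum,
          Ek A hF b xs hls σ v hv x0 z0 k', pow_succ]
        ring
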